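/- For a Runge–Kutta method with stability function $R(z)$, define the dispersion error $\Phi(y)=y-\arg R(iy)$ and say the method has dispersion order $q$ if $\Phi(y)=O(y^{q+1})$ as $y\to0$. If the method has consistency order $p$ (i.e. $R(z)=e^z+O(z^{p+1})$), then the dispersion order $q$ satisfies $q=p$ if $p$ is even and $q\ge p+1$ if $p$ is odd. -/

import Mathlib

open Asymptotics Filter Complex Topology

lemma koto_factor_exact (f : ℂ → ℂ) (p : ℕ) (hf : AnalyticAt ℂ f 0)
    (h1 : f =O[nhds 0] fun z : ℂ => z ^ (p+1)) (h2 : ¬ f =O[nhds 0] fun z : ℂ => z ^ (p+2)) :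
    ∃ d : ℂ → ℂ, AnalyticAt ℂ d 0 ∧ d 0 ≠ 0 ∧ ∀ᶠ z in nhds 0, f z = z ^ (p+1) * d z := by
  have hne : ¬ ∀ᶠ z in nhds (0:ℂ), f z = 0 := by
    intro h
    exact h2 ((isBigO_zero _ _).congr' (by filter_upwards [h] with z hz using hz.symm) EventuallyEq.rfl)
  have hord : analyticOrderAt f 0 ≠ ⊤ := fun h => hne (analyticOrderAt_eq_top.mp h)
  obtain ⟨n, hn⟩ := WithTop.ne_top_iff_exists.mp hord
  obtain ⟨g, hg, hg0, hfg⟩ := hf.analyticOrderAt_eq_natCast.mp hn.symm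
  simp only [sub_zero, smul_eq_mul] at hfg
  -- n ≥ p + 1
  have hge : p + 1 ≤ n := by
    by_contra hlt
    push_neg at hlt
    have hnp : n ≤ p := Nat.lt_succ_iff.mp hlt
    obtain ⟨C, hC⟩ := h1.bound
    have hb : ∀ᶠ z in 𝓝[≠] (0:ℂ), ‖g z‖ ≤ C * ‖z‖ ^ (p + 1 - n) := by
      filter_upwards [(hfg.and hC).filter_mono nhdsWithin_le_nhds, self_mem_nhdsWithin]
        with z hz hz0
      have hzn : (z:ℂ) ^ n ≠ 0 := pow_ne_zero _ hz0
      have : ‖z ^ n * g z‖ ≤ C * ‖z‖ ^ (p+1) := by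
        rw [← hz.1]; simpa [norm_pow] using hz.2
      rw [norm_mul, norm_pow] at this
      have hzpos : 0 < ‖z‖ ^ n := pow_pos (norm_pos_iff.mpr hz0) n
      rw [← le_div_iff₀' hzpos] at this
      calc ‖g z‖ ≤ C * ‖z‖ ^ (p+1) / ‖z‖ ^ n := this
        _ = C * ‖z‖ ^ (p + 1 - n) := by
            rw [mul_div_assoc, div_eq_mul_inv, ← pow_sub₀ _ (norm_ne_zero_iff.mpr hz0) (by omega)]
    have htend : Tendsto g (𝓝[≠] (0:ℂ)) (nhds 0) := by
      apply squeeze_zero_norm' hb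
      have : Tendsto (fun z : ℂ => C * ‖z‖ ^ (p + 1 - n)) (nhds 0) (nhds (C * ‖(0:ℂ)‖ ^ (p+1-n))) := by
        exact (tendsto_const_nhds.mul (((continuous_norm).tendsto 0).pow _))
      have h0 : C * ‖(0:ℂ)‖ ^ (p+1-n) = 0 := by
        rw [norm_zero, zero_pow (by omega), mul_zero]
      exact (h0 ▸ this).mono_left nhdsWithin_le_nhds
    have : g 0 = 0 :=
      tendsto_nhds_unique ((hg.continuousAt.continuousWithinAt (s := {(0:ℂ)}ᶜ)).tendsto) htend
    exact hg0 this
  -- n ≤ p + 1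
  have hle : n ≤ p + 1 := by
    by_contra hlt
    push_neg at hlt
    apply h2
    have hO : (fun z : ℂ => z ^ n * g z) =O[nhds 0] fun z : ℂ => z ^ (p+2) := by
      have hgb : g =O[nhds 0] (fun _ : ℂ => (1:ℂ)) := hg.continuousAt.isBigO_one ℂ
      have hzb : (fun z : ℂ => z ^ n) =O[nhds 0] fun z : ℂ => z ^ (p+2) := by
        apply IsBigO.of_bound 1
        have hev : ∀ᶠ z : ℂ in nhds 0, ‖z‖ ≤ 1 := by
          have := Metric.ball_mem_nhds (0:ℂ) one_pos
          filter_upwards [this] with z hz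
          simp only [Metric.mem_ball, dist_zero_right] at hz; exact le_of_lt hz
        filter_upwards [hev] with z hz
        rw [norm_pow, norm_pow, one_mul]
        exact pow_le_pow_of_le_one (norm_nonneg _) hz (by omega)
      simpa using hzb.mul hgb
    exact hO.congr' (by filter_upwards [hfg] with z hz using hz.symm) EventuallyEq.rfl
  have hnp : n = p + 1 := le_antisymm hle hge
  exact ⟨g, hg, hg0, by simpa [hnp] using hfg⟩

lemma koto_arg_exp (θ : ℝ) (h1 : -Real.pi < θ) (h2 : θ ≤ Real.pi) : arg (Complex.exp (θ * I)) = θ := by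
  rw [Complex.arg_exp_mul_I]
  apply (toIocMod_eq_self _).mpr
  constructor
  · exact h1
  · linarith

lemma koto_arg_le (x : ℂ) (ha : |arg x| ≤ Real.pi / 2) :
    |arg x| ≤ Real.pi / 2 * (|x.im| / ‖x‖) := by
  have hs : Real.sin |arg x| = |Real.sin (arg x)| := by
    rcases abs_cases (arg x) with ⟨h, hpos⟩ | ⟨h, hneg⟩
    · rw [h, _root_.abs_of_nonneg]
      exact Real.sin_nonneg_of_nonneg_of_le_pi hpos (by linarith [Real.pi_pos, (h ▸ ha : arg x ≤ Real.pi/2)])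
    · have h2 := (abs_le.mp ha).1
      rw [h, Real.sin_neg, _root_.abs_of_nonpos]
      exact Real.sin_nonpos_of_nonpos_of_neg_pi_le (le_of_lt hneg) (by linarith [Real.pi_pos])
  have key : 2 / Real.pi * |arg x| ≤ |Real.sin (arg x)| := by
    rw [← hs]; exact Real.mul_le_sin (abs_nonneg _) ha
  rw [Complex.sin_arg, abs_div, _root_.abs_of_nonneg (norm_nonneg x)] at key
  have hpi := Real.pi_pos
  calc |arg x| = Real.pi / 2 * (2 / Real.pi * |arg x|) := by field_simp
    _ ≤ Real.pi / 2 * (|x.im| / ‖x‖) := by nlinarith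

lemma koto_abs_im (z : ℂ) : ‖z - (starRingEnd ℂ) z‖ = 2 * |z.im| := by
  rw [Complex.sub_conj]
  rw [norm_mul, Complex.norm_I, Complex.norm_real, Real.norm_eq_abs, mul_one, abs_mul]
  norm_num


theorem koto_dispersion_order (P Q : Polynomial ℝ) (p : ℕ) (hQ : Q.coeff 0 ≠ 0)
    (R : ℂ → ℂ)
    (hR : ∀ z : ℂ, R z =
      (P.map (algebraMap ℝ ℂ)).eval z / (Q.map (algebraMap ℝ ℂ)).eval z)
    (hcons : (fun z : ℂ => R z - Complex.exp z) =O[nhds 0] fun z => z ^ (p + 1))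
    (hexact : ¬ ((fun z : ℂ => R z - Complex.exp z) =O[nhds 0] fun z => z ^ (p + 2))) :
    (Even p →
      ((fun y : ℝ => y - Complex.arg (R ((y : ℂ) * Complex.I)))
          =O[nhds 0] fun y => y ^ (p + 1)) ∧
      ¬ ((fun y : ℝ => y - Complex.arg (R ((y : ℂ) * Complex.I)))
          =O[nhds 0] fun y => y ^ (p + 2))) ∧
    (Odd p →
      (fun y : ℝ => y - Complex.arg (R ((y : ℂ) * Complex.I)))
        =O[nhds 0] fun y => y ^ (p + 2)) := by
  have hpi3 := Real.pi_gt_three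
  have hpi := Real.pi_pos
  -- analyticity of R at 0
  have hB0 : (Q.map (algebraMap ℝ ℂ)).eval 0 ≠ 0 := by
    rw [← Polynomial.coeff_zero_eq_eval_zero, Polynomial.coeff_map]
    simpa using hQ
  have hRA : AnalyticAt ℂ R 0 := by
    have h1 : AnalyticAt ℂ (fun z => (P.map (algebraMap ℝ ℂ)).eval z) 0 :=
      (Polynomial.differentiable _).analyticAt 0
    have h2 : AnalyticAt ℂ (fun z => (Q.map (algebraMap ℝ ℂ)).eval z) 0 :=
      (Polynomial.differentiable _).analyticAt 0
    exact (h1.div h2 hB0).congr (Filter.Eventually.of_forall fun z => (hR z).symm)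
  have hD : AnalyticAt ℂ (fun z => R z - Complex.exp z) 0 :=
    hRA.sub (Complex.differentiable_exp.analyticAt 0)
  obtain ⟨d, hd, hd0, hDd⟩ := koto_factor_exact _ p hD hcons hexact
  have hR0 : R 0 = 1 := by
    have h0 := hDd.self_of_nhds
    simp only [ne_eq, OfNat.ofNat_ne_zero, not_false_eq_true, zero_pow, zero_mul,
      Complex.exp_zero, pow_succ] at h0
    have : R 0 - Complex.exp 0 = 0 := by
      simpa [pow_succ] using h0
    rw [Complex.exp_zero] at this
    linear_combination this
  -- conjugation symmetry
  have hconj : ∀ w : ℂ, (starRingEnd ℂ) (R w) = R ((starRingEnd ℂ) w) := by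
    have hP : ∀ (S : Polynomial ℝ) (w : ℂ), (starRingEnd ℂ) ((S.map (algebraMap ℝ ℂ)).eval w)
        = (S.map (algebraMap ℝ ℂ)).eval ((starRingEnd ℂ) w) := by
      intro S w
      rw [Polynomial.eval_map, Polynomial.eval_map, Polynomial.hom_eval₂]
      congr 1
      ext x
      simp [Complex.conj_ofReal]
    intro w
    rw [hR, hR, map_div₀, hP, hP]
  -- the odd part G and its factorization
  set G : ℂ → ℂ := fun z => Complex.exp (-z) * R z - Complex.exp z * R (-z) with hGdef
  set k : ℂ → ℂ := fun z =>
    Complex.exp (-z) * d z - (-1:ℂ)^(p+1) * (Complex.exp z * d (-z)) with hkdef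
  have hkA : AnalyticAt ℂ k 0 := by
    have hidneg : AnalyticAt ℂ (fun z : ℂ => -z) 0 := (analyticAt_id.neg)
    have hdneg : AnalyticAt ℂ (fun z : ℂ => d (-z)) 0 := by
      have h1 : AnalyticAt ℂ d ((fun z : ℂ => -z) 0) := by simpa using hd
      exact h1.comp hidneg
    have hexp : AnalyticAt ℂ Complex.exp 0 := Complex.differentiable_exp.analyticAt 0
    have hexpneg : AnalyticAt ℂ (fun z : ℂ => Complex.exp (-z)) 0 := by
      have h1 : AnalyticAt ℂ Complex.exp ((fun z : ℂ => -z) 0) := by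
        simpa using (Complex.differentiable_exp.analyticAt (-(0:ℂ)))
      exact h1.comp hidneg
    exact (hexpneg.mul hd).sub (analyticAt_const.mul (hexp.mul hdneg))
  have hk0 : k 0 = (1 - (-1:ℂ)^(p+1)) * d 0 := by
    simp only [hkdef, neg_zero, Complex.exp_zero, one_mul]
    ring
  have hGk : ∀ᶠ z in nhds (0:ℂ), G z = z^(p+1) * k z := by
    have hneg : Filter.Tendsto (fun z : ℂ => -z) (nhds 0) (nhds 0) := by
      simpa using (continuous_neg.tendsto (0:ℂ))
    filter_upwards [hDd, hneg.eventually hDd] with z h1 h2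
    have hee : Complex.exp (-z) * Complex.exp z = 1 := by
      rw [← Complex.exp_add]; simp
    have hG : G z = Complex.exp (-z) * (R z - Complex.exp z)
        - Complex.exp z * (R (-z) - Complex.exp (-z)) := by
      simp only [hGdef]; ring
    rw [hG, h1, h2, neg_pow (z) (p+1)]
    simp only [hkdef]
    ring
  -- the function g(y) = e^{-iy} R(iy)
  set g : ℝ → ℂ := fun y => Complex.exp (-((y:ℂ) * I)) * R ((y:ℂ) * I) with hgdef
  have hmap : Filter.Tendsto (fun y : ℝ => (y:ℂ) * I) (nhds 0) (nhds 0) := by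
    have hcont : Continuous (fun y : ℝ => (y:ℂ) * I) :=
      Complex.continuous_ofReal.mul continuous_const
    simpa using hcont.tendsto 0
  have hgcont : Filter.Tendsto g (nhds 0) (nhds 1) := by
    have h1 : Filter.Tendsto (fun y : ℝ => Complex.exp (-((y:ℂ) * I))) (nhds 0) (nhds 1) := by
      have h2 : Filter.Tendsto (fun y : ℝ => -((y:ℂ) * I)) (nhds 0) (nhds 0) := by
        simpa using hmap.neg
      have h3 := Complex.continuous_exp.tendsto 0
      rw [Complex.exp_zero] at h3
      exact h3.comp h2
    have h2 : Filter.Tendsto (fun y : ℝ => R ((y:ℂ) * I)) (nhds 0) (nhds 1) := by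
      have h3 := hRA.continuousAt.tendsto
      rw [hR0] at h3
      exact h3.comp hmap
    simpa using h1.mul h2
  -- G(iy) in terms of Im g(y)
  have hGim : ∀ y : ℝ, ‖G ((y:ℂ) * I)‖ = 2 * |(g y).im| := by
    intro y
    have hc : (starRingEnd ℂ) (g y) = Complex.exp ((y:ℂ) * I) * R (-((y:ℂ) * I)) := by
      rw [hgdef]
      simp only [map_mul, ← Complex.exp_conj, hconj]
      congr 2 <;> simp [Complex.conj_ofReal]
    have hGy : G ((y:ℂ) * I) = g y - (starRingEnd ℂ) (g y) := by
      rw [hc, hGdef, hgdef]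
    rw [hGy, koto_abs_im]
  -- eventual bounds
  have evg : ∀ᶠ y : ℝ in nhds 0, ‖g y - 1‖ < 1/2 := by
    have hball : Metric.ball (1:ℂ) (1/2) ∈ nhds (1:ℂ) := Metric.ball_mem_nhds _ (by norm_num)
    filter_upwards [hgcont hball] with y hy
    simpa [Complex.dist_eq] using hy
  have hacont : Filter.Tendsto (fun y => arg (g y)) (nhds 0) (nhds 0) := by
    have harg : ContinuousAt arg 1 := Complex.continuousAt_arg (by
      rw [Complex.mem_slitPlane_iff]; left; norm_num)
    have := harg.tendsto.comp hgcont
    simpa [Complex.arg_one, Function.comp_def] using this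
  have eva : ∀ᶠ y : ℝ in nhds 0, |arg (g y)| ≤ 1 := by
    have hball : Metric.ball (0:ℝ) 1 ∈ nhds (0:ℝ) := Metric.ball_mem_nhds _ one_pos
    filter_upwards [hacont hball] with y hy
    simp only [Set.mem_preimage, Metric.mem_ball, Real.dist_eq, sub_zero] at hy
    exact hy.le
  have evy : ∀ᶠ y : ℝ in nhds 0, |y| < 1 := by
    filter_upwards [Metric.ball_mem_nhds (0:ℝ) one_pos] with y hy
    rwa [Metric.mem_ball, Real.dist_eq, sub_zero] at hy
  have evgfacts : ∀ᶠ y : ℝ in nhds 0,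
      g y ≠ 0 ∧ 1/2 ≤ ‖g y‖ ∧ ‖g y‖ ≤ 3/2 := by
    filter_upwards [evg] with y hy
    have h1 : |‖g y‖ - ‖(1:ℂ)‖| ≤ ‖g y - 1‖ :=
      abs_norm_sub_norm_le _ _
    rw [norm_one] at h1
    have h2 := abs_le.mp h1
    refine ⟨?_, by linarith [h2.1], by linarith [h2.2]⟩
    intro h0
    rw [h0] at hy
    simp at hy
    norm_num at hy
  -- the key identity: arg R(iy) = y + arg g(y) near 0
  have evArg : ∀ᶠ y : ℝ in nhds 0, arg (R ((y:ℂ) * I)) = y + arg (g y) := by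
    filter_upwards [evgfacts, eva, evy] with y hgf h2 h3
    obtain ⟨hg0, hgl, hgu⟩ := hgf
    have hRg : R ((y:ℂ) * I) = Complex.exp ((y:ℂ) * I) * g y := by
      rw [hgdef, ← mul_assoc, ← Complex.exp_add]
      simp
    have hsplit : Complex.exp ((y:ℂ) * I) * g y
        = (‖g y‖ : ℂ) * Complex.exp ((↑(y + arg (g y))) * I) := by
      conv_lhs => rw [← Complex.norm_mul_exp_arg_mul_I (g y)]
      rw [Complex.ofReal_add, add_mul, Complex.exp_add]
      ring
    rw [hRg, hsplit, Complex.arg_real_mul _ (norm_pos_iff.mpr hg0), koto_arg_exp]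
    · have := abs_lt.mp h3
      have := abs_le.mp h2
      linarith [this.1, this.2]
    · have := abs_lt.mp h3
      have := abs_le.mp h2
      linarith [this.1, this.2]
  -- eventual equality of the dispersion error with -arg g
  have evPhi : ∀ᶠ y : ℝ in nhds 0, y - arg (R ((y:ℂ) * I)) = -(arg (g y)) := by
    filter_upwards [evArg] with y hy
    rw [hy]; ring
  -- upper bound |arg g| ≤ π |Im g|
  have evUp : ∀ᶠ y : ℝ in nhds 0, |arg (g y)| ≤ Real.pi * |(g y).im| := by
    filter_upwards [evgfacts, eva] with y hgf h2
    obtain ⟨hg0, hgl, hgu⟩ := hgf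
    have hle : |arg (g y)| ≤ Real.pi / 2 := by linarith
    have hb := koto_arg_le (g y) hle
    have h3 : |(g y).im| / ‖g y‖ ≤ 2 * |(g y).im| := by
      rw [div_le_iff₀ (by linarith : (0:ℝ) < ‖g y‖)]
      nlinarith [abs_nonneg (g y).im]
    calc |arg (g y)| ≤ Real.pi / 2 * (|(g y).im| / ‖g y‖) := hb
      _ ≤ Real.pi / 2 * (2 * |(g y).im|) := by nlinarith
      _ = Real.pi * |(g y).im| := by ring
  -- lower bound |Im g| ≤ 2 |arg g|
  have evLow : ∀ᶠ y : ℝ in nhds 0, |(g y).im| ≤ 2 * |arg (g y)| := by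
    filter_upwards [evgfacts] with y hgf
    obtain ⟨hg0, hgl, hgu⟩ := hgf
    have hsin : Real.sin (arg (g y)) = (g y).im / ‖g y‖ := Complex.sin_arg _
    have h1 : |(g y).im| = |Real.sin (arg (g y))| * ‖g y‖ := by
      rw [hsin, abs_div, _root_.abs_of_nonneg (norm_nonneg _)]
      field_simp
    rw [h1]
    calc |Real.sin (arg (g y))| * ‖g y‖
        ≤ |arg (g y)| * (3/2) := by
          apply mul_le_mul Real.abs_sin_le_abs hgu (norm_nonneg _) (abs_nonneg _)
      _ ≤ 2 * |arg (g y)| := by nlinarith [abs_nonneg (arg (g y))]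
  -- factorization of G(iy)
  have evGk : ∀ᶠ y : ℝ in nhds 0,
      ‖G ((y:ℂ) * I)‖ = |y|^(p+1) * ‖k ((y:ℂ) * I)‖ := by
    filter_upwards [hmap.eventually hGk] with y hy
    rw [hy, norm_mul, norm_pow]
    congr 2
    simp
  have evconv : Filter.Tendsto (fun y : ℝ => k ((y:ℂ) * I)) (nhds 0) (nhds (k 0)) :=
    (hkA.continuousAt.tendsto).comp hmap
  have evkup : ∀ᶠ y : ℝ in nhds 0, ‖k ((y:ℂ) * I)‖ ≤ ‖k 0‖ + 1 := by
    have hball : Metric.ball (k 0) 1 ∈ nhds (k 0) := Metric.ball_mem_nhds _ one_pos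
    filter_upwards [evconv hball] with y hy
    simp only [Set.mem_preimage, Metric.mem_ball, Complex.dist_eq] at hy
    linarith [(abs_le.mp (le_of_lt (lt_of_le_of_lt (abs_norm_sub_norm_le _ _) hy))).2]
  refine ⟨fun hpe => ⟨?_, ?_⟩, fun hpo => ?_⟩
  · -- p even : O(y^{p+1})
    apply IsBigO.of_bound (Real.pi * (‖k 0‖ + 1))
    filter_upwards [evPhi, evUp, evGk, evkup] with y h1 h2 h3 h4
    rw [Real.norm_eq_abs, Real.norm_eq_abs, h1, abs_neg, _root_.abs_pow]
    have him : |(g y).im| = ‖G ((y:ℂ)*I)‖ / 2 := by rw [hGim]; ring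
    calc |arg (g y)| ≤ Real.pi * |(g y).im| := h2
      _ = Real.pi * (|y|^(p+1) * ‖k ((y:ℂ)*I)‖) / 2 := by rw [him, h3]; ring
      _ ≤ Real.pi * (|y|^(p+1) * (‖k 0‖ + 1)) / 2 := by
          gcongr
      _ ≤ Real.pi * (‖k 0‖ + 1) * |y|^(p+1) := by
          have hA : 0 ≤ Real.pi * (|y|^(p+1) * (‖k 0‖ + 1)) :=
            mul_nonneg (le_of_lt hpi) (mul_nonneg (pow_nonneg (abs_nonneg y) _)
              (by linarith [norm_nonneg (k 0)]))
          nlinarith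
  · -- p even : not O(y^{p+2})
    intro hO
    have hk0ne : k 0 ≠ 0 := by
      rw [hk0]
      have : ((-1:ℂ))^(p+1) = -1 := Odd.neg_one_pow (Even.add_one hpe)
      rw [this]
      simpa using hd0
    set ε := ‖k 0‖ with hεdef
    have hεpos : 0 < ε := norm_pos_iff.mpr hk0ne
    have evklow : ∀ᶠ y : ℝ in nhds 0, ε/2 ≤ ‖k ((y:ℂ) * I)‖ := by
      have hball : Metric.ball (k 0) (ε/2) ∈ nhds (k 0) := Metric.ball_mem_nhds _ (by linarith)
      filter_upwards [evconv hball] with y hy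
      simp only [Set.mem_preimage, Metric.mem_ball, Complex.dist_eq] at hy
      have h1 := abs_norm_sub_norm_le (k ((y:ℂ)*I)) (k 0)
      have h2 := (abs_le.mp (le_of_lt (lt_of_le_of_lt h1 hy))).1
      linarith
    obtain ⟨c, hc⟩ := hO.bound
    set c' := max c 1 with hc'def
    have hc'pos : (0:ℝ) < c' := lt_of_lt_of_le one_pos (le_max_right _ _)
    have evbig : ∀ᶠ y : ℝ in nhds 0,
        ε/8 * |y|^(p+1) ≤ c' * |y|^(p+2) := by
      filter_upwards [hc, evPhi, evLow, evGk, evklow] with y h1 h2 h3 h4 h5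
      have him : |(g y).im| = ‖G ((y:ℂ)*I)‖ / 2 := by rw [hGim]; ring
      have him2 : |(g y).im| = |y|^(p+1) * ‖k ((y:ℂ)*I)‖ / 2 := by
        rw [him, h4]
      have hlow : ε/8 * |y|^(p+1) ≤ |arg (g y)| := by
        have hge : ε/2 * |y|^(p+1) ≤ |y|^(p+1) * ‖k ((y:ℂ)*I)‖ := by
          have hpw := pow_nonneg (abs_nonneg y) (p+1)
          nlinarith
        linarith
      have hup : |arg (g y)| ≤ c' * |y|^(p+2) := by
        rw [Real.norm_eq_abs, Real.norm_eq_abs, h2, abs_neg, _root_.abs_pow] at h1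
        calc |arg (g y)| ≤ c * |y|^(p+2) := h1
          _ ≤ c' * |y|^(p+2) := by
              apply mul_le_mul_of_nonneg_right (le_max_left _ _)
                (pow_nonneg (abs_nonneg y) _)
      linarith
    have evsmall : ∀ᶠ y : ℝ in nhds 0, |y| < ε/(16*c') := by
      filter_upwards [Metric.ball_mem_nhds (0:ℝ) (by positivity : (0:ℝ) < ε/(16*c'))] with y hy
      rwa [Metric.mem_ball, Real.dist_eq, sub_zero] at hy
    have hfreq : ∃ y : ℝ, y ≠ 0 ∧ (ε/8 * |y|^(p+1) ≤ c' * |y|^(p+2)) ∧ |y| < ε/(16*c') := by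
      have := ((evbig.and evsmall).filter_mono (nhdsWithin_le_nhds (s := {(0:ℝ)}ᶜ))).and
        self_mem_nhdsWithin
      obtain ⟨y, ⟨hy1, hy2⟩, hy3⟩ := this.exists
      exact ⟨y, hy3, hy1, hy2⟩
    obtain ⟨y, hy0, hy1, hy2⟩ := hfreq
    have hyabs : 0 < |y| := abs_pos.mpr hy0
    have hyp : 0 < |y|^(p+1) := pow_pos hyabs _
    have hpow : |y|^(p+2) = |y|^(p+1) * |y| := by
      rw [show p+2 = (p+1)+1 from rfl, pow_succ]
    rw [hpow] at hy1
    have h6 : ε/8 ≤ c' * |y| := by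
      have h := mul_le_mul_of_nonneg_right hy1 (le_of_lt (inv_pos.mpr hyp))
      calc ε/8 = ε/8 * |y|^(p+1) * (|y|^(p+1))⁻¹ := by field_simp
        _ ≤ c' * (|y|^(p+1) * |y|) * (|y|^(p+1))⁻¹ := h
        _ = c' * |y| := by field_simp
    have h7 : c' * |y| < ε/16 := by
      have h := mul_lt_mul_of_pos_left hy2 hc'pos
      calc c' * |y| < c' * (ε/(16*c')) := h
        _ = ε/16 := by field_simp
    linarith
  · -- p odd : O(y^{p+2})
    have hk00 : k 0 = 0 := by
      rw [hk0]
      have : ((-1:ℂ))^(p+1) = 1 := Even.neg_one_pow (Odd.add_one hpo)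
      rw [this]
      ring
    obtain ⟨s, hs⟩ := hkA
    have hk1A : AnalyticAt ℂ (dslope k 0) 0 :=
      hs.has_fpower_series_dslope_fslope.analyticAt
    have hkz : ∀ z : ℂ, k z = z * dslope k 0 z := by
      intro z
      have h := sub_smul_dslope k 0 z
      rw [hk00, sub_zero, sub_zero, smul_eq_mul] at h
      exact h.symm
    have evconv1 : Filter.Tendsto (fun y : ℝ => dslope k 0 ((y:ℂ) * I)) (nhds 0)
        (nhds (dslope k 0 0)) := (hk1A.continuousAt.tendsto).comp hmap
    set M := ‖dslope k 0 0‖ with hM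
    have evk1up : ∀ᶠ y : ℝ in nhds 0, ‖dslope k 0 ((y:ℂ) * I)‖ ≤ M + 1 := by
      have hball : Metric.ball (dslope k 0 0) 1 ∈ nhds (dslope k 0 0) :=
        Metric.ball_mem_nhds _ one_pos
      filter_upwards [evconv1 hball] with y hy
      simp only [Set.mem_preimage, Metric.mem_ball, Complex.dist_eq] at hy
      have h1 := abs_norm_sub_norm_le (dslope k 0 ((y:ℂ)*I)) (dslope k 0 0)
      linarith [(abs_le.mp (le_of_lt (lt_of_le_of_lt h1 hy))).2]
    apply IsBigO.of_bound (Real.pi * (M + 1))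
    filter_upwards [evPhi, evUp, evGk, evk1up] with y h1 h2 h3 h4
    rw [Real.norm_eq_abs, Real.norm_eq_abs, h1, abs_neg, _root_.abs_pow]
    have him : |(g y).im| = ‖G ((y:ℂ)*I)‖ / 2 := by rw [hGim]; ring
    have hky : ‖k ((y:ℂ)*I)‖ = |y| * ‖dslope k 0 ((y:ℂ)*I)‖ := by
      rw [hkz ((y:ℂ)*I), norm_mul]
      congr 1
      simp
    calc |arg (g y)| ≤ Real.pi * |(g y).im| := h2
      _ = Real.pi * (|y|^(p+1) * (|y| * ‖dslope k 0 ((y:ℂ)*I)‖)) / 2 := by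
          rw [him, h3, hky]; ring
      _ = Real.pi * (|y|^(p+2) * ‖dslope k 0 ((y:ℂ)*I)‖) / 2 := by
          rw [show p+2 = (p+1)+1 from rfl, pow_succ]; ring
      _ ≤ Real.pi * (|y|^(p+2) * (M + 1)) / 2 := by
          gcongr
      _ ≤ Real.pi * (M + 1) * |y|^(p+2) := by
          have hM0 : 0 ≤ M := norm_nonneg _
          have hA : 0 ≤ Real.pi * (|y|^(p+2) * (M + 1)) :=
            mul_nonneg (le_of_lt hpi) (mul_nonneg (pow_nonneg (abs_nonneg y) _) (by linarith))
          nlinarith
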